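/- Let g : {0,1}^n → ℝ^n be monotone increasing, u ∈ ℝ̄^n, and suppose E(u) = y with y_k = 1 and u_k = −∞. Let t = g(E(u[k:=+∞]))_k and let x ∈ ℝ̄ with x ≤ t. Then E(u[k:=x]) = y. -/
import Mathlib


open Function

/-- Best-response map: `G_u(y) i = 𝟙(g(y)_i ≥ u_i)`, comparisons in the extended reals. -/
noncomputable def Gmap {n : ℕ} (g : (Fin n → Bool) → Fin n → ℝ) (u : Fin n → EReal)
    (y : Fin n → Bool) : Fin n → Bool :=
  fun i => decide (u i ≤ ((g y i : ℝ) : EReal))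

/-- Minimal equilibrium: `E(u) = (G_u)^[n](0)`. -/
noncomputable def Emin {n : ℕ} (g : (Fin n → Bool) → Fin n → ℝ) (u : Fin n → EReal) : Fin n → Bool :=
  (Gmap g u)^[n] (fun _ => false)

section Aux

variable {n : ℕ} {g : (Fin n → Bool) → Fin n → ℝ}

lemma Gmap_mono (hg : Monotone g) (u : Fin n → EReal) : Monotone (Gmap g u) := by
  intro y y' hyy' i
  simp only [Gmap, Bool.le_iff_imp, decide_eq_true_eq]
  intro h
  exact h.trans (by exact_mod_cast hg hyy' i)

lemma Gmap_anti (u u' : Fin n → EReal) (huu' : u ≤ u') (y : Fin n → Bool) :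
    Gmap g u' y ≤ Gmap g u y := by
  intro i
  simp only [Gmap, Bool.le_iff_imp, decide_eq_true_eq]
  intro h
  exact (huu' i).trans h

lemma iterate_le_fixed {f : (Fin n → Bool) → (Fin n → Bool)} (hf : Monotone f)
    {p : Fin n → Bool} (hp : f p = p) (m : ℕ) : f^[m] (fun _ => false) ≤ p := by
  induction m with
  | zero => intro i; simp
  | succ m ih =>
      rw [Function.iterate_succ_apply']
      calc f (f^[m] (fun _ => false)) ≤ f p := hf ih
        _ = p := hp

lemma card_lt_of_lt {a b : Fin n → Bool} (hab : a < b) :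
    (Finset.univ.filter fun i => a i = true).card <
      (Finset.univ.filter fun i => b i = true).card := by
  apply Finset.card_lt_card
  constructor
  · intro i hi
    simp only [Finset.mem_filter, Finset.mem_univ, true_and] at hi ⊢
    exact Bool.le_iff_imp.mp (hab.le i) hi
  · intro hsub
    rcases lt_iff_le_and_ne.mp hab with ⟨hle, hne⟩
    apply hne
    funext i
    by_cases hbi : b i = true
    · have : i ∈ Finset.univ.filter fun j => b j = true := by simp [hbi]
      have := hsub this
      simp only [Finset.mem_filter, Finset.mem_univ, true_and] at this
      rw [this, hbi]
    · have hai : a i ≠ true := fun h => hbi (Bool.le_iff_imp.mp (hle i) h)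
      simp only [Bool.not_eq_true] at hai hbi
      rw [hai, hbi]

/-- `Emin` is a fixed point of `Gmap`. -/
lemma Emin_fixed (hg : Monotone g) (u : Fin n → EReal) :
    Gmap g u (Emin g u) = Emin g u := by
  set f := Gmap g u with hf
  have hfm : Monotone f := Gmap_mono hg u
  have hchain : Monotone fun m => f^[m] (fun _ => false) :=
    hfm.monotone_iterate_of_le_map (fun i => by simp)
  by_contra hne
  -- then all consecutive iterates up to n are distinct
  have hstrict : ∀ m ≤ n, f^[m] (fun _ => false) < f^[m + 1] (fun _ => false) := by
    intro m hm
    refine lt_of_le_of_ne (hchain (Nat.le_succ m)) ?_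
    intro heq
    apply hne
    have hfix : f (f^[m] (fun _ => false)) = f^[m] (fun _ => false) :=
      (Function.iterate_succ_apply' f m _ ▸ heq).symm
    have h1 : f^[n] (fun _ => false) = f^[m] (fun _ => false) := by
      have : f^[n] (fun _ => false) = f^[n - m] (f^[m] (fun _ => false)) := by
        rw [← Function.iterate_add_apply, Nat.sub_add_cancel hm]
      rw [this, Function.iterate_fixed hfix]
    show f (Emin g u) = Emin g u
    simp only [Emin, ← hf, h1, hfix]
  have hcard : ∀ m ≤ n + 1,
      m ≤ (Finset.univ.filter fun i => f^[m] (fun _ => false) i = true).card := by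
    intro m hm
    induction m with
    | zero => simp
    | succ m ih =>
        have h1 := ih (Nat.le_of_succ_le hm)
        have h2 := card_lt_of_lt (hstrict m (Nat.lt_succ_iff.mp hm))
        omega
  have := hcard (n + 1) le_rfl
  have hle : (Finset.univ.filter
      fun i => f^[n + 1] (fun _ => false) i = true).card ≤ n := by
    calc _ ≤ (Finset.univ : Finset (Fin n)).card := Finset.card_filter_le _ _
      _ = n := by simp
  omega

/-- Least fixed point property. -/
lemma Emin_le_fixed (hg : Monotone g) (u : Fin n → EReal) {p : Fin n → Bool}
    (hp : Gmap g u p = p) : Emin g u ≤ p :=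
  iterate_le_fixed (Gmap_mono hg u) hp n

/-- `Emin` is antitone in `u`. -/
lemma Emin_anti (hg : Monotone g) {u u' : Fin n → EReal} (huu' : u ≤ u') :
    Emin g u' ≤ Emin g u := by
  have key : ∀ m, (Gmap g u')^[m] (fun _ => false) ≤ (Gmap g u)^[m] (fun _ => false) := by
    intro m
    induction m with
    | zero => exact le_rfl
    | succ m ih =>
        rw [Function.iterate_succ_apply', Function.iterate_succ_apply']
        calc Gmap g u' ((Gmap g u')^[m] (fun _ => false))
            ≤ Gmap g u ((Gmap g u')^[m] (fun _ => false)) := Gmap_anti u u' huu' _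
          _ ≤ Gmap g u ((Gmap g u)^[m] (fun _ => false)) := Gmap_mono hg u ih
  exact key n

end Aux

/-- Induction step (acting coordinate): if `E(u) = y`, `y_k = 1` and `u_k = −∞`, then
replacing `u_k` by any `x` below the threshold `t = g(E(u[k:=+∞]))_k` preserves the
minimal equilibrium. -/
theorem Emin_update_below_threshold {n : ℕ} (g : (Fin n → Bool) → Fin n → ℝ)
    (hg : Monotone g) (u : Fin n → EReal) (y : Fin n → Bool) (hy : Emin g u = y)
    (k : Fin n) (hk : y k = true) (huk : u k = ⊥) (x : EReal)
    (hx : x ≤ ((g (Emin g (Function.update u k ⊤)) k : ℝ) : EReal)) :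
    Emin g (Function.update u k x) = y := by
  set u' := Function.update u k x with hu'
  set ut := Function.update u k ⊤ with hut
  set w := Emin g u' with hw
  set z := Emin g ut with hz
  have hu_le_u' : u ≤ u' := by
    intro i
    by_cases hik : i = k
    · subst hik; rw [huk]; exact bot_le
    · rw [hu', Function.update_of_ne hik]
  have hu'_le_ut : u' ≤ ut := by
    intro i
    by_cases hik : i = k
    · subst hik; simp [hu', hut]
    · rw [hu', hut, Function.update_of_ne hik, Function.update_of_ne hik]
  have hw_le_y : w ≤ y := hy ▸ Emin_anti hg hu_le_u'
  have hfix_w : Gmap g u' w = w := Emin_fixed hg u'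
  have hfix_y : Gmap g u (Emin g u) = Emin g u := Emin_fixed hg u
  rw [hy] at hfix_y
  by_cases hwk : w k = true
  · -- w is a fixed point of Gmap g u, hence y ≤ w
    have hfix : Gmap g u w = w := by
      funext i
      by_cases hik : i = k
      · rw [hik, hwk]
        simp [Gmap, huk]
      · have : u i = u' i := (Function.update_of_ne hik _ _).symm
        calc Gmap g u w i = Gmap g u' w i := by simp [Gmap, this]
          _ = w i := by rw [hfix_w]
      
    have hy_le_w : y ≤ w := hy ▸ Emin_le_fixed hg u hfix
    exact le_antisymm hw_le_y hy_le_w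
  · -- w is a fixed point of Gmap g ut, so z ≤ w, contradiction at k
    exfalso
    have hfix : Gmap g ut w = w := by
      funext i
      by_cases hik : i = k
      · simp only [Bool.not_eq_true] at hwk
        rw [hik, hwk]
        simp only [Gmap, hut, Function.update_self]
        simp [not_le.mpr (EReal.coe_lt_top (g w k))]
      · have : ut i = u' i := by
          rw [hut, hu', Function.update_of_ne hik, Function.update_of_ne hik]
        calc Gmap g ut w i = Gmap g u' w i := by simp [Gmap, this]
          _ = w i := by rw [hfix_w]
    have hz_le_w : z ≤ w := Emin_le_fixed hg ut hfix
    have hxw : x ≤ ((g w k : ℝ) : EReal) :=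
      hx.trans (by exact_mod_cast hg hz_le_w k)
    have : w k = true := by
      conv_lhs => rw [← hfix_w]
      simp [Gmap, hu', hxw]
    exact hwk this
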